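/- arXiv:2506.23242 — 2 statements merged into one kernel-verified Lean document; each statement's English description precedes it below -/
import Mathlib

section
/- For T > 0 and complex σ not of the form -j·n·(2π/T) for any integer n, 1/(e^{σT} - 1) = (1/T)·∑_{n=-∞}^{∞} 1/(σ + j·n·(2π/T)) - 1/2, where the sum is the symmetric principal value. -/
open Complex Filter Finset Real

noncomputable section


lemma cosh_exp (w : ℂ) : Complex.cosh w = (Complex.exp w + Complex.exp (-w)) / 2 := rfl
lemma sinh_exp (w : ℂ) : Complex.sinh w = (Complex.exp w - Complex.exp (-w)) / 2 := rfl

lemma coeff_integral (z : ℂ) (hz : ∀ n : ℤ, z + Complex.I * n ≠ 0) (n : ℤ) :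
    haveI : Fact (0 < 2 * π) := ⟨by positivity⟩
    fourierCoeff (AddCircle.liftIco (2 * π) 0 (fun x : ℝ => Complex.cosh (z * (x - π)))) n
      = Complex.sinh (π * z) * z / (π * (z ^ 2 + (n : ℂ) ^ 2)) := by
  haveI : Fact (0 < 2 * π) := ⟨by positivity⟩
  have hzn : ∀ m : ℤ, z - Complex.I * m ≠ 0 := by
    intro m
    have := hz (-m)
    intro h
    apply this
    push_cast
    rw [← h]; ring
  have hc₁ : z - Complex.I * n ≠ 0 := hzn n
  have hc₂ : -z - Complex.I * n ≠ 0 := by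
    have := hz n; intro h; apply this; rw [← neg_eq_zero, ← h]; ring
  have hπ : (π : ℂ) ≠ 0 := Complex.ofReal_ne_zero.mpr Real.pi_ne_zero
  rw [fourierCoeff_liftIco_eq]
  rw [fourierCoeffOn_eq_integral]
  have hint : Set.EqOn
      (fun x : ℝ => (fourier (-n) (x : AddCircle (0 + 2 * π - 0)) : ℂ) • Complex.cosh (z * (x - π)))
      (fun x : ℝ => Complex.exp (-(π * z)) / 2 * Complex.exp ((z - Complex.I * n) * x)
        + Complex.exp (π * z) / 2 * Complex.exp ((-z - Complex.I * n) * x))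
      (Set.uIcc 0 (0 + 2 * π)) := by
    intro x _
    simp only [fourier_coe_apply, smul_eq_mul]
    have h1 : 2 * (π : ℂ) * Complex.I * (-n : ℤ) * (x : ℝ) / ((0 + 2 * π - 0 : ℝ) : ℂ)
        = -(Complex.I * n * x) := by
      push_cast
      field_simp
      ring
    rw [h1, cosh_exp]
    rw [mul_comm, div_mul_eq_mul_div, add_mul, ← Complex.exp_add, ← Complex.exp_add, add_div,
      div_mul_eq_mul_div, div_mul_eq_mul_div, ← Complex.exp_add, ← Complex.exp_add]
    ring_nf
  rw [intervalIntegral.integral_congr hint]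
  have i₁ : IntervalIntegrable (fun x : ℝ => Complex.exp ((z - Complex.I * n) * x))
      MeasureTheory.volume 0 (0 + 2 * π) :=
    (Complex.continuous_exp.comp (continuous_const.mul Complex.continuous_ofReal)).intervalIntegrable _ _
  have i₂ : IntervalIntegrable (fun x : ℝ => Complex.exp ((-z - Complex.I * n) * x))
      MeasureTheory.volume 0 (0 + 2 * π) :=
    (Complex.continuous_exp.comp (continuous_const.mul Complex.continuous_ofReal)).intervalIntegrable _ _
  rw [intervalIntegral.integral_add (i₁.const_mul _) (i₂.const_mul _),
    intervalIntegral.integral_const_mul, intervalIntegral.integral_const_mul,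
    integral_exp_mul_complex hc₁, integral_exp_mul_complex hc₂]
  have e₁ : Complex.exp ((z - Complex.I * n) * ((0 + 2 * π : ℝ) : ℂ))
      = Complex.exp (π * z) ^ 2 := by
    have h : (z - Complex.I * n) * ((0 + 2 * π : ℝ) : ℂ)
        = (π * z + π * z) + ((-n : ℤ) : ℂ) * (2 * π * Complex.I) := by
      push_cast; ring
    rw [h, Complex.exp_add, Complex.exp_int_mul_two_pi_mul_I, mul_one, Complex.exp_add, sq]
  have e₂ : Complex.exp ((-z - Complex.I * n) * ((0 + 2 * π : ℝ) : ℂ))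
      = (Complex.exp (π * z))⁻¹ ^ 2 := by
    have h : (-z - Complex.I * n) * ((0 + 2 * π : ℝ) : ℂ)
        = (-(π * z) + -(π * z)) + ((-n : ℤ) : ℂ) * (2 * π * Complex.I) := by
      push_cast; ring
    rw [h, Complex.exp_add, Complex.exp_int_mul_two_pi_mul_I, mul_one, Complex.exp_add, sq,
      Complex.exp_neg]
  rw [e₁, e₂]
  simp only [Complex.ofReal_zero, mul_zero, Complex.exp_zero]
  have hE : Complex.exp (π * z) ≠ 0 := Complex.exp_ne_zero _
  have hv : z + Complex.I * n ≠ 0 := hz n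
  have hden : z ^ 2 + (n : ℂ) ^ 2 ≠ 0 := by
    have h : z ^ 2 + (n : ℂ) ^ 2 = (z - Complex.I * n) * (z + Complex.I * n) := by
      rw [show (z - Complex.I * n) * (z + Complex.I * n) = z ^ 2 - Complex.I ^ 2 * n ^ 2 from by
        ring, Complex.I_sq]
      ring
    rw [h]
    exact mul_ne_zero hc₁ hv
  have p1 : Complex.exp (-(π * z)) / 2 * ((Complex.exp (π * z) ^ 2 - 1) / (z - Complex.I * n))
      = Complex.sinh (π * z) * (1 / (z - Complex.I * n)) := by
    rw [sinh_exp, Complex.exp_neg]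
    field_simp
  have p2 : Complex.exp (π * z) / 2 * (((Complex.exp (π * z))⁻¹ ^ 2 - 1) / (-z - Complex.I * n))
      = Complex.sinh (π * z) * (1 / (z + Complex.I * n)) := by
    rw [show -z - Complex.I * n = -(z + Complex.I * n) from by ring, div_neg, sinh_exp,
      Complex.exp_neg]
    field_simp
    ring
  rw [p1, p2]
  rw [real_smul]
  push_cast
  field_simp
  ring_nf
  simp only [Complex.I_sq]
  ring




lemma summable_aux (z : ℂ) :
    Summable (fun n : ℤ => Complex.sinh (π * z) * z / (π * (z ^ 2 + (n : ℂ) ^ 2))) := by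
  obtain ⟨M, hM⟩ := exists_nat_ge (2 * ‖z‖ ^ 2 + 1)
  have hM1 : (1 : ℝ) ≤ M := le_trans (by nlinarith [sq_nonneg ‖z‖]) hM
  apply Summable.of_norm_bounded_eventually
    (g := fun n : ℤ => ‖Complex.sinh (π * z) * z‖ / π * 2 * (1 / (n : ℝ) ^ 2))
  · apply Summable.mul_left
    exact Real.summable_one_div_int_pow.mpr one_lt_two
  · rw [Filter.eventually_cofinite]
    apply Set.Finite.subset (Set.finite_Icc (-(M : ℤ)) (M : ℤ))
    intro n hn
    simp only [Set.mem_setOf_eq, not_le] at hn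
    by_contra hmem
    apply absurd hn
    push_neg
    simp only [Set.mem_Icc, not_and_or, not_le] at hmem
    have habsz : (M : ℤ) ≤ |n| := by
      rcases hmem with h | h
      · rw [abs_of_neg (by omega)]; omega
      · rw [abs_of_pos (by omega)]; omega
    have habs : (M : ℝ) ≤ |(n : ℝ)| := by
      rw [← Int.cast_abs]
      exact_mod_cast habsz
    have hn2 : 2 * ‖z‖ ^ 2 + 1 ≤ (n : ℝ) ^ 2 := by
      calc 2 * ‖z‖ ^ 2 + 1 ≤ (M : ℝ) := hM
        _ ≤ (M : ℝ) ^ 2 := le_self_pow₀ hM1 two_ne_zero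
        _ ≤ |(n : ℝ)| ^ 2 := by gcongr
        _ = (n : ℝ) ^ 2 := sq_abs _
    have hnorm : ‖Complex.sinh (π * z) * z / (π * (z ^ 2 + (n : ℂ) ^ 2))‖
        = ‖Complex.sinh (π * z) * z‖ / (π * ‖z ^ 2 + (n : ℂ) ^ 2‖) := by
      rw [norm_div]
      congr 1
      rw [norm_mul, Complex.norm_real, Real.norm_eq_abs, abs_of_pos Real.pi_pos]
    have h2 : ‖((n : ℂ)) ^ 2‖ = (n : ℝ) ^ 2 := by
      rw [norm_pow, show ‖((n : ℤ) : ℂ)‖ = |(n : ℝ)| from by exact_mod_cast Complex.norm_intCast n,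
        _root_.sq_abs]
    have hlow : (n : ℝ) ^ 2 / 2 ≤ ‖z ^ 2 + (n : ℂ) ^ 2‖ := by
      have h1 : ‖((n : ℂ)) ^ 2‖ - ‖z ^ 2‖ ≤ ‖z ^ 2 + (n : ℂ) ^ 2‖ := by
        have h := norm_sub_norm_le ((n : ℂ) ^ 2) (-(z ^ 2))
        simp only [sub_neg_eq_add, norm_neg] at h
        calc ‖((n : ℂ)) ^ 2‖ - ‖z ^ 2‖ ≤ ‖(n : ℂ) ^ 2 + z ^ 2‖ := h
          _ = ‖z ^ 2 + (n : ℂ) ^ 2‖ := by rw [add_comm]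
      rw [h2, norm_pow] at h1
      nlinarith [norm_nonneg z]
    rw [hnorm]
    have hpos : (0 : ℝ) < (n : ℝ) ^ 2 := by nlinarith [norm_nonneg z]
    calc ‖Complex.sinh (π * z) * z‖ / (π * ‖z ^ 2 + (n : ℂ) ^ 2‖)
        ≤ ‖Complex.sinh (π * z) * z‖ / (π * ((n : ℝ) ^ 2 / 2)) := by
          gcongr
          all_goals first
            | exact norm_nonneg _
            | positivity
            | exact Real.pi_pos.le
            | skip
      _ = ‖Complex.sinh (π * z) * z‖ / π * 2 * (1 / (n : ℝ) ^ 2) := by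
          field_simp



lemma hasSum_key (z : ℂ) (hz : ∀ n : ℤ, z + Complex.I * n ≠ 0) :
    HasSum (fun n : ℤ => z / (z ^ 2 + (n : ℂ) ^ 2))
      (π * Complex.cosh (π * z) / Complex.sinh (π * z)) := by
  haveI : Fact (0 < 2 * π) := ⟨by positivity⟩
  have hπ : (π : ℂ) ≠ 0 := Complex.ofReal_ne_zero.mpr Real.pi_ne_zero
  have hden : ∀ n : ℤ, z ^ 2 + (n : ℂ) ^ 2 ≠ 0 := by
    intro n
    have h : z ^ 2 + (n : ℂ) ^ 2 = (z + Complex.I * n) * (z - Complex.I * n) := by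
      rw [show (z + Complex.I * n) * (z - Complex.I * n) = z ^ 2 - Complex.I ^ 2 * n ^ 2 from by
        ring, Complex.I_sq]
      ring
    rw [h]
    refine mul_ne_zero (hz n) ?_
    intro hcc
    apply hz (-n)
    push_cast
    rw [← hcc]; ring
  have hsinh : Complex.sinh (π * z) ≠ 0 := by
    intro h
    have hE : Complex.exp (π * z) ≠ 0 := Complex.exp_ne_zero _
    have h1 : Complex.exp (π * z + π * z) = 1 := by
      have heq : Complex.sinh (π * z) = (Complex.exp (π * z) - (Complex.exp (π * z))⁻¹) / 2 := by
        rw [show Complex.sinh (π * z) = (Complex.exp (π * z) - Complex.exp (-(π * z))) / 2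
          from rfl, Complex.exp_neg]
      rw [heq] at h
      field_simp at h
      rw [Complex.exp_add]
      linear_combination h
    rw [Complex.exp_eq_one_iff] at h1
    obtain ⟨k, hk⟩ := h1
    apply hz (-k)
    have hzk : z = k * Complex.I := by
      have : (π : ℂ) * (z + z) = (π : ℂ) * (k * (2 * Complex.I)) := by
        rw [mul_add]
        rw [hk]; push_cast; ring
      have := mul_left_cancel₀ hπ this
      linear_combination this / 2
    rw [hzk]
    push_cast
    ring
  set f : ℝ → ℂ := fun x => Complex.cosh (z * (x - π)) with hf
  set F : C(AddCircle (2 * π), ℂ) :=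
    ⟨AddCircle.liftIco (2 * π) 0 f, by
      apply AddCircle.liftIco_zero_continuous
      · simp only [hf]
        norm_num
        congr 1
        ring
      · exact (Complex.continuous_cosh.comp (by continuity)).continuousOn⟩ with hF
  have hcoeff : ∀ n : ℤ, fourierCoeff (⇑F) n
      = Complex.sinh (π * z) * z / (π * (z ^ 2 + (n : ℂ) ^ 2)) := fun n => coeff_integral z hz n
  have hsummable : Summable (fourierCoeff (⇑F)) := by
    rw [show fourierCoeff (⇑F) = fun n : ℤ => Complex.sinh (π * z) * z / (π * (z ^ 2 + (n : ℂ) ^ 2))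
      from funext hcoeff]
    exact summable_aux z
  have hsum := has_pointwise_sum_fourier_series_of_summable hsummable (0 : AddCircle (2 * π))
  have hF0 : F (0 : AddCircle (2 * π)) = Complex.cosh (π * z) := by
    show AddCircle.liftIco (2 * π) 0 f ((0 : ℝ) : AddCircle (2 * π)) = _
    rw [AddCircle.liftIco_zero_coe_apply (by constructor <;> [rfl; positivity])]
    simp only [hf]
    rw [show z * ((0:ℝ) - π) = -(π * z) from by push_cast; ring, Complex.cosh_neg]
  simp only [fourier_eval_zero, smul_eq_mul, mul_one, hF0] at hsum
  rw [show (fun n : ℤ => fourierCoeff (⇑F) n) = fun n : ℤ =>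
      Complex.sinh (π * z) * z / (π * (z ^ 2 + (n : ℂ) ^ 2)) from funext hcoeff] at hsum
  have h2 := hsum.mul_left ((π : ℂ) / Complex.sinh (π * z))
  have heq : ∀ n : ℤ, (π : ℂ) / Complex.sinh (π * z)
      * (Complex.sinh (π * z) * z / (π * (z ^ 2 + (n : ℂ) ^ 2)))
      = z / (z ^ 2 + (n : ℂ) ^ 2) := by
    intro n
    have hd := hden n
    field_simp
  rw [show (fun n : ℤ => (π : ℂ) / Complex.sinh (π * z)
      * (Complex.sinh (π * z) * z / (π * (z ^ 2 + (n : ℂ) ^ 2))))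
      = fun n : ℤ => z / (z ^ 2 + (n : ℂ) ^ 2) from funext heq] at h2
  convert h2 using 1
  · rfl
  ring



lemma tendsto_key (z : ℂ) (hz : ∀ n : ℤ, z + Complex.I * n ≠ 0) :
    Filter.Tendsto
      (fun N : ℕ => ∑ n ∈ Finset.Icc (-(N : ℤ)) (N : ℤ), 1 / (z + Complex.I * n))
      Filter.atTop (nhds (π * Complex.cosh (π * z) / Complex.sinh (π * z))) := by
  have hzn : ∀ m : ℤ, z - Complex.I * m ≠ 0 := by
    intro m
    have := hz (-m)
    intro h
    apply this
    push_cast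
    rw [← h]; ring
  have hmono : Monotone (fun N : ℕ => Finset.Icc (-(N : ℤ)) (N : ℤ)) := by
    intro a b hab
    apply Finset.Icc_subset_Icc
    · exact neg_le_neg (by exact_mod_cast hab)
    · exact_mod_cast hab
  have hexh : ∀ n : ℤ, ∃ N : ℕ, n ∈ Finset.Icc (-(N : ℤ)) (N : ℤ) := by
    intro n
    refine ⟨n.natAbs, ?_⟩
    simp only [Finset.mem_Icc]
    omega
  have htend := (hasSum_key z hz).comp
    (Filter.tendsto_atTop_finset_of_monotone hmono hexh)
  have hpair : ∀ N : ℕ, ∑ n ∈ Finset.Icc (-(N : ℤ)) (N : ℤ), 1 / (z + Complex.I * n)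
      = ∑ n ∈ Finset.Icc (-(N : ℤ)) (N : ℤ), z / (z ^ 2 + (n : ℂ) ^ 2) := by
    intro N
    have hrefl : ∑ n ∈ Finset.Icc (-(N : ℤ)) (N : ℤ), 1 / (z + Complex.I * n)
        = ∑ n ∈ Finset.Icc (-(N : ℤ)) (N : ℤ), 1 / (z - Complex.I * n) := by
      refine Finset.sum_nbij' (fun n => -n) (fun n => -n) ?_ ?_ ?_ ?_ ?_ <;>
        intro a ha <;> simp only [Finset.mem_Icc] at * <;> try omega
      push_cast
      ring_nf
    have h2 : (2 : ℂ) * ∑ n ∈ Finset.Icc (-(N : ℤ)) (N : ℤ), 1 / (z + Complex.I * n)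
        = 2 * ∑ n ∈ Finset.Icc (-(N : ℤ)) (N : ℤ), z / (z ^ 2 + (n : ℂ) ^ 2) := by
      calc (2 : ℂ) * ∑ n ∈ Finset.Icc (-(N : ℤ)) (N : ℤ), 1 / (z + Complex.I * n)
          = (∑ n ∈ Finset.Icc (-(N : ℤ)) (N : ℤ), 1 / (z + Complex.I * n))
            + ∑ n ∈ Finset.Icc (-(N : ℤ)) (N : ℤ), 1 / (z - Complex.I * n) := by
            rw [← hrefl]; ring
        _ = ∑ n ∈ Finset.Icc (-(N : ℤ)) (N : ℤ), (1 / (z + Complex.I * n) + 1 / (z - Complex.I * n)) := by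
            rw [Finset.sum_add_distrib]
        _ = ∑ n ∈ Finset.Icc (-(N : ℤ)) (N : ℤ), 2 * (z / (z ^ 2 + (n : ℂ) ^ 2)) := by
            refine Finset.sum_congr rfl fun n _ => ?_
            have hu := hz n
            have hv := hzn n
            have hd : z ^ 2 + (n : ℂ) ^ 2 ≠ 0 := by
              have h : z ^ 2 + (n : ℂ) ^ 2 = (z + Complex.I * n) * (z - Complex.I * n) := by
                rw [show (z + Complex.I * n) * (z - Complex.I * n)
                  = z ^ 2 - Complex.I ^ 2 * n ^ 2 from by ring, Complex.I_sq]
                ring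
              rw [h]; exact mul_ne_zero hu hv
            rw [div_add_div _ _ hu hv,
              show (1 : ℂ) * (z - Complex.I * n) + (z + Complex.I * n) * 1 = 2 * z from by ring,
              show (z + Complex.I * n) * (z - Complex.I * n) = z ^ 2 + (n : ℂ) ^ 2 from by
                rw [show (z + Complex.I * n) * (z - Complex.I * n)
                  = z ^ 2 - Complex.I ^ 2 * n ^ 2 from by ring, Complex.I_sq]; ring,
              mul_div_assoc]
        _ = 2 * ∑ n ∈ Finset.Icc (-(N : ℤ)) (N : ℤ), z / (z ^ 2 + (n : ℂ) ^ 2) := by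
            rw [Finset.mul_sum]
    have := mul_left_cancel₀ (two_ne_zero' ℂ) h2
    exact this
  rw [show (fun N : ℕ => ∑ n ∈ Finset.Icc (-(N : ℤ)) (N : ℤ), 1 / (z + Complex.I * n))
      = fun N : ℕ => ∑ n ∈ Finset.Icc (-(N : ℤ)) (N : ℤ), z / (z ^ 2 + (n : ℂ) ^ 2)
      from funext hpair]
  exact htend



theorem kernel_expansion (T : ℝ) (hT : 0 < T) (σ : ℂ)
    (hσ : ∀ n : ℤ, σ ≠ -Complex.I * n * (2 * π / T)) :
    Filter.Tendsto
      (fun N : ℕ =>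
        (1 / (T : ℂ)) * ∑ n ∈ Finset.Icc (-(N : ℤ)) (N : ℤ),
          1 / (σ + Complex.I * n * (2 * π / T)))
      Filter.atTop
      (nhds (1 / (Complex.exp (σ * T) - 1) + 1 / 2)) := by
  have hT0 : (T : ℂ) ≠ 0 := Complex.ofReal_ne_zero.mpr hT.ne'
  have hπ : (π : ℂ) ≠ 0 := Complex.ofReal_ne_zero.mpr Real.pi_ne_zero
  set z : ℂ := σ * T / (2 * π) with hzdef
  have hz : ∀ n : ℤ, z + Complex.I * n ≠ 0 := by
    intro n h
    apply hσ n
    rw [hzdef] at h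
    field_simp at h
    have hσv : σ = -(Complex.I * (n : ℂ) * (2 * (π : ℂ))) / (T : ℂ) := by
      rw [eq_div_iff hT0]
      linear_combination h
    rw [hσv]
    field_simp
  have hterm : ∀ n : ℤ, σ + Complex.I * n * (2 * π / T) = (2 * π / T) * (z + Complex.I * n) := by
    intro n
    rw [hzdef]
    push_cast
    field_simp
    try ring
  have hfun : ∀ N : ℕ, (1 / (T : ℂ)) * ∑ n ∈ Finset.Icc (-(N : ℤ)) (N : ℤ),
      1 / (σ + Complex.I * n * (2 * π / T))
      = (1 / (2 * (π : ℂ))) * ∑ n ∈ Finset.Icc (-(N : ℤ)) (N : ℤ), 1 / (z + Complex.I * n) := by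
    intro N
    rw [Finset.mul_sum, Finset.mul_sum]
    refine Finset.sum_congr rfl fun n _ => ?_
    rw [hterm n]
    have h1 : z + Complex.I * n ≠ 0 := hz n
    field_simp
    try ring
  have hw : (π : ℂ) * z = σ * T / 2 := by
    rw [hzdef]; field_simp
  have hE1 : Complex.exp (σ * T) - 1 ≠ 0 := by
    intro h
    have h1 : Complex.exp (σ * (T : ℂ)) = 1 := by linear_combination h
    rw [Complex.exp_eq_one_iff] at h1
    obtain ⟨k, hk⟩ := h1
    apply hσ (-k)
    have hσval : σ = (k : ℂ) * (2 * (π : ℂ) * Complex.I) / T := by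
      rw [eq_div_iff hT0]; exact hk
    rw [hσval]
    push_cast
    field_simp
  have hEsq : Complex.exp (π * z) ^ 2 = Complex.exp (σ * T) := by
    rw [sq, ← Complex.exp_add, hw]
    congr 1
    ring
  have hE : Complex.exp (π * z) ≠ 0 := Complex.exp_ne_zero _
  have hsinh : Complex.sinh (π * z) ≠ 0 := by
    intro h
    have heq : Complex.sinh ((π : ℂ) * z)
        = (Complex.exp (π * z) - (Complex.exp (π * z))⁻¹) / 2 := by
      rw [show Complex.sinh ((π : ℂ) * z)
        = (Complex.exp (π * z) - Complex.exp (-(π * z))) / 2 from rfl, Complex.exp_neg]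
    rw [heq] at h
    field_simp at h
    apply hE1
    rw [← hEsq, sq]
    linear_combination h
  have hE2 : Complex.exp (π * z) ^ 2 - 1 ≠ 0 := by rw [hEsq]; exact hE1
  have hsinh2 : Complex.exp (π * z) - (Complex.exp (π * z))⁻¹ ≠ 0 := by
    intro h
    apply hE2
    have h3 := congrArg (· * Complex.exp (π * z)) h
    simp only [sub_mul, inv_mul_cancel₀ hE, zero_mul] at h3
    rw [sq]
    linear_combination h3
  have hlim : (1 / (2 * (π : ℂ))) * ((π : ℂ) * Complex.cosh (π * z) / Complex.sinh (π * z))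
      = 1 / (Complex.exp (σ * T) - 1) + 1 / 2 := by
    have lhs_eq : (1 / (2 * (π : ℂ))) * ((π : ℂ) * Complex.cosh (π * z) / Complex.sinh (π * z))
        = Complex.cosh (π * z) / (2 * Complex.sinh (π * z)) := by
      field_simp
      try ring
    rw [lhs_eq,
      show Complex.cosh ((π : ℂ) * z)
        = (Complex.exp (π * z) + Complex.exp (-(π * z))) / 2 from rfl,
      show Complex.sinh ((π : ℂ) * z)
        = (Complex.exp (π * z) - Complex.exp (-(π * z))) / 2 from rfl, Complex.exp_neg, ← hEsq]
    rw [show (2 : ℂ) * ((Complex.exp ((π : ℂ) * z) - (Complex.exp ((π : ℂ) * z))⁻¹) / 2)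
      = Complex.exp ((π : ℂ) * z) - (Complex.exp ((π : ℂ) * z))⁻¹ from by ring]
    rw [div_add_div _ _ hE2 (two_ne_zero' ℂ),
      div_eq_div_iff hsinh2 (mul_ne_zero hE2 (two_ne_zero' ℂ))]
    field_simp
    try ring
  rw [show (fun N : ℕ => (1 / (T : ℂ)) * ∑ n ∈ Finset.Icc (-(N : ℤ)) (N : ℤ),
      1 / (σ + Complex.I * n * (2 * π / T)))
      = fun N : ℕ => (1 / (2 * (π : ℂ))) * ∑ n ∈ Finset.Icc (-(N : ℤ)) (N : ℤ),
      1 / (z + Complex.I * n) from funext hfun, ← hlim]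
  exact (tendsto_key z hz).const_mul _

end
end

section
/- Let A be a complex n×n matrix with distinct eigenvalues λ₁,…,λ_q, and let P_j be the spectral (Riesz) projections, with m_j the index of λ_j (i.e., ((A-λ_jI)P_j)^{m_j} = 0 and ((A-λ_jI)P_j)^{m_j-1} ≠ 0). Then for every s not an eigenvalue of A, (sI - A)^{-1} = ∑_{j=1}^{q} ∑_{r=1}^{m_j} (A - λ_jI)^{r-1} P_j / (s - λ_j)^r. -/
theorem resolvent_partial_fraction_expansion {n q : ℕ}
    (A : Matrix (Fin n) (Fin n) ℂ)
    (lam : Fin q → ℂ) (hl : Function.Injective lam)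
    (P : Fin q → Matrix (Fin n) (Fin n) ℂ)
    (m : Fin q → ℕ) (hm : ∀ j, 1 ≤ m j)
    (hcomm : ∀ j, A * P j = P j * A)
    (horth : ∀ j k, P j * P k = if j = k then P j else 0)
    (hsum : ∑ j, P j = (1 : Matrix (Fin n) (Fin n) ℂ))
    (hnil : ∀ j, ((A - lam j • (1 : Matrix (Fin n) (Fin n) ℂ)) * P j) ^ (m j) = 0)
    (hidx : ∀ j, ((A - lam j • (1 : Matrix (Fin n) (Fin n) ℂ)) * P j) ^ (m j - 1) ≠ 0)
    (s : ℂ) (hs : ∀ j, s ≠ lam j) :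
    (s • (1 : Matrix (Fin n) (Fin n) ℂ) - A)⁻¹
      = ∑ j, ∑ r ∈ Finset.range (m j),
          ((s - lam j) ^ (r + 1))⁻¹ •
            ((A - lam j • (1 : Matrix (Fin n) (Fin n) ℂ)) ^ r * P j) := by
  have hsj : ∀ j, s - lam j ≠ 0 := fun j => sub_ne_zero.mpr (hs j)
  have key : ∀ j, (A - lam j • (1 : Matrix (Fin n) (Fin n) ℂ)) ^ (m j) * P j = 0 := by
    intro j
    have hc : Commute (A - lam j • (1 : Matrix (Fin n) (Fin n) ℂ)) (P j) := by
      unfold Commute SemiconjBy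
      rw [Matrix.sub_mul, Matrix.mul_sub, hcomm j, Matrix.smul_mul, Matrix.mul_smul,
        Matrix.one_mul, Matrix.mul_one]
    have hPpow : P j ^ (m j) = P j := by
      have hP : IsIdempotentElem (P j) := by
        have := horth j j; simpa [IsIdempotentElem] using this
      obtain ⟨k, hk⟩ : ∃ k, m j = k + 1 := ⟨m j - 1, (Nat.succ_pred_eq_of_pos (hm j)).symm⟩
      rw [hk, hP.pow_succ_eq]
    calc (A - lam j • (1 : Matrix (Fin n) (Fin n) ℂ)) ^ (m j) * P j
        = (A - lam j • (1 : Matrix (Fin n) (Fin n) ℂ)) ^ (m j) * P j ^ (m j) := by rw [hPpow]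
      _ = ((A - lam j • (1 : Matrix (Fin n) (Fin n) ℂ)) * P j) ^ (m j) := (hc.mul_pow _).symm
      _ = 0 := hnil j
  apply Matrix.inv_eq_right_inv
  rw [Finset.mul_sum]
  have main : ∀ j, (s • (1 : Matrix (Fin n) (Fin n) ℂ) - A) *
      (∑ r ∈ Finset.range (m j), ((s - lam j) ^ (r + 1))⁻¹ •
        ((A - lam j • (1 : Matrix (Fin n) (Fin n) ℂ)) ^ r * P j)) = P j := by
    intro j
    set N := A - lam j • (1 : Matrix (Fin n) (Fin n) ℂ) with hN
    have hSA : s • (1 : Matrix (Fin n) (Fin n) ℂ) - A = (s - lam j) • 1 - N := by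
      rw [hN, sub_smul]; abel
    have step : ∀ r, (s • (1 : Matrix (Fin n) (Fin n) ℂ) - A) *
        (((s - lam j) ^ (r + 1))⁻¹ • (N ^ r * P j))
        = ((s - lam j) ^ r)⁻¹ • (N ^ r * P j)
          - ((s - lam j) ^ (r + 1))⁻¹ • (N ^ (r + 1) * P j) := by
      intro r
      rw [hSA, Matrix.sub_mul, Matrix.smul_mul, Matrix.one_mul, smul_smul, Matrix.mul_smul,
        ← Matrix.mul_assoc, ← pow_succ']
      congr 2
      rw [pow_succ', mul_inv, ← mul_assoc, mul_inv_cancel₀ (hsj j), one_mul]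
    rw [Finset.mul_sum]
    rw [Finset.sum_congr rfl fun r _ => step r, Finset.sum_range_sub']
    simp [key j]
    exact Or.inr (key j)
  rw [Finset.sum_congr rfl fun j _ => main j, hsum]
end
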